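/- Let γ ∈ (0,1], σ > 0, λ₁ > 0 and j ∈ ℕ. There exists a constant C > 0, depending only on j, γ, σ and λ₁, such that for every z ∈ [0, λ₁], every k ∈ ℤ³ and every η ∈ ℝ³, the j-th iterated Fréchet derivative of the smooth map η ↦ exp(z⟨k,η⟩^γ)·⟨k,η⟩^σ satisfies ‖D^j_η (exp(z⟨k,η⟩^γ)·⟨k,η⟩^σ)‖ ≤ C·⟨k,η⟩^{−j(1−γ)}·exp(z⟨k,η⟩^γ)·⟨k,η⟩^σ, and in particular this is at most C·exp(z⟨k,η⟩^γ)·⟨k,η⟩^σ. -/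

import Mathlib

open Real Set ContDiff

lemma nat_lt_infty (m : ℕ) : (m : WithTop ℕ∞) < ∞ := by
  exact_mod_cast ENat.coe_lt_top m

section translation
variable {E F : Type*} [NormedAddCommGroup E] [NormedSpace ℝ E]
  [NormedAddCommGroup F] [NormedSpace ℝ F]

lemma itfd_comp_const_add {f : E → F} (hf : ContDiff ℝ ∞ f) (c : E) :
    ∀ (n : ℕ) (x : E), iteratedFDeriv ℝ n (fun y => f (c + y)) x = iteratedFDeriv ℝ n f (c + x) := by
  intro n
  induction n with
  | zero => intro x; ext m; simp
  | succ n IH =>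
    intro x
    rw [iteratedFDeriv_succ_eq_comp_left, iteratedFDeriv_succ_eq_comp_left]
    simp only [Function.comp_apply]
    congr 1
    rw [funext IH]
    have hdiff : DifferentiableAt ℝ (iteratedFDeriv ℝ n f) (c + x) :=
      (hf.differentiable_iteratedFDeriv (nat_lt_infty n)).differentiableAt
    have hinner : HasFDerivAt (fun x : E => c + x) (ContinuousLinearMap.id ℝ E) x :=
      (hasFDerivAt_id x).const_add c
    have := (hdiff.hasFDerivAt.comp x hinner).fderiv
    simpa [Function.comp_def] using this

end translation

section scaling
variable {E F : Type*} [NormedAddCommGroup E] [NormedSpace ℝ E]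
  [NormedAddCommGroup F] [NormedSpace ℝ F]

lemma norm_itfd_comp_smul_le {f : E → F} (hf : ContDiff ℝ ∞ f) (μ : ℝ) (n : ℕ) (x : E) :
    ‖iteratedFDeriv ℝ n (fun y => f (μ • y)) x‖ ≤ |μ| ^ n * ‖iteratedFDeriv ℝ n f (μ • x)‖ := by
  have h := ContinuousLinearMap.iteratedFDeriv_comp_right
    (μ • ContinuousLinearMap.id ℝ E) hf x (le_of_lt (nat_lt_infty n))
  have heq : (f ∘ (μ • ContinuousLinearMap.id ℝ E)) = fun y => f (μ • y) := by
    funext y; simp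
  rw [heq] at h
  have hx : (μ • ContinuousLinearMap.id ℝ E) x = μ • x := by simp
  rw [hx] at h
  rw [h]
  refine le_trans (ContinuousMultilinearMap.norm_compContinuousLinearMap_le _ _) ?_
  rw [mul_comm]
  gcongr
  calc (∏ _i : Fin n, ‖μ • ContinuousLinearMap.id ℝ E‖)
      ≤ ∏ _i : Fin n, |μ| := by
        refine Finset.prod_le_prod (fun _ _ => norm_nonneg _) (fun _ _ => ?_)
        refine le_trans (ContinuousLinearMap.opNorm_smul_le _ _) ?_
        simpa using mul_le_of_le_one_right (abs_nonneg μ) ContinuousLinearMap.norm_id_le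
    _ = |μ| ^ n := by simp

end scaling

section scaling2
variable {E F : Type*} [NormedAddCommGroup E] [NormedSpace ℝ E]
  [NormedAddCommGroup F] [NormedSpace ℝ F]

lemma norm_itfd_comp_affine_le {f : E → F} (hf : ContDiff ℝ ∞ f) (c : E) (μ : ℝ) (n : ℕ) :
    ‖iteratedFDeriv ℝ n (fun y => f (c + μ • y)) 0‖ ≤ |μ| ^ n * ‖iteratedFDeriv ℝ n f c‖ := by
  have hg : ContDiff ℝ ∞ (fun v : E => f (c + v)) := hf.comp (contDiff_const.add contDiff_id)
  have h1 : (fun y : E => f (c + μ • y)) = fun y => (fun v => f (c + v)) (μ • y) := rfl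
  rw [h1]
  refine le_trans (norm_itfd_comp_smul_le hg μ n 0) ?_
  rw [smul_zero, itfd_comp_const_add hf c n 0, add_zero]

lemma norm_itfd_le_comp_affine {f : E → F} (hf : ContDiff ℝ ∞ f) {μ : ℝ} (hμ : 0 < μ) (c : E)
    (n : ℕ) :
    ‖iteratedFDeriv ℝ n f c‖ ≤ μ⁻¹ ^ n * ‖iteratedFDeriv ℝ n (fun y => f (c + μ • y)) 0‖ := by
  have hφ : ContDiff ℝ ∞ (fun y : E => f (c + μ • y)) :=
    hf.comp (contDiff_const.add (contDiff_id.const_smul μ))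
  have key : (fun w : E => (fun y : E => f (c + μ • y)) (μ⁻¹ • w)) = fun w => f (c + w) := by
    funext w
    simp [smul_smul, mul_inv_cancel₀ (ne_of_gt hμ)]
  have h0 : ‖iteratedFDeriv ℝ n f c‖ = ‖iteratedFDeriv ℝ n (fun w : E => f (c + w)) 0‖ := by
    rw [itfd_comp_const_add hf c n 0, add_zero]
  rw [h0, ← key]
  have := norm_itfd_comp_smul_le hφ μ⁻¹ n 0
  rw [smul_zero] at this
  refine le_trans this ?_
  rw [abs_of_pos (inv_pos.2 hμ)]

end scaling2

lemma itderivWithin_const_rpow (a p : ℝ) :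
    ∀ n : ℕ, ∀ x ∈ Ioi (0:ℝ),
      iteratedDerivWithin n (fun s : ℝ => a * s ^ p) (Ioi 0) x
        = (a * ∏ l ∈ Finset.range n, (p - l)) * x ^ (p - n) := by
  intro n
  induction n with
  | zero => intro x _; simp
  | succ n IH =>
    intro x hx
    rw [iteratedDerivWithin_succ,
      derivWithin_of_isOpen isOpen_Ioi hx]
    have hev : iteratedDerivWithin n (fun s : ℝ => a * s ^ p) (Ioi 0) =ᶠ[nhds x]
        fun y => (a * ∏ l ∈ Finset.range n, (p - l)) * y ^ (p - n) :=
      Filter.eventuallyEq_of_mem (isOpen_Ioi.mem_nhds hx) IH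
    rw [hev.deriv_eq]
    have hd := ((Real.hasDerivAt_rpow_const (p := p - n)
      (Or.inl (ne_of_gt (mem_Ioi.1 hx)))).const_mul
      (a * ∏ l ∈ Finset.range n, (p - l))).deriv
    rw [hd, Finset.prod_range_succ]
    have : p - ↑n - 1 = p - ↑(n + 1) := by push_cast; ring
    rw [this]
    ring

section clm
variable {E F : Type*} [NormedAddCommGroup E] [NormedSpace ℝ E]
  [NormedAddCommGroup F] [NormedSpace ℝ F]

lemma norm_itfd_clm_le (e : E →L[ℝ] F) {l : ℕ} (hl : 1 ≤ l) (x : E) :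
    ‖iteratedFDeriv ℝ l (fun y => e y) x‖ ≤ ‖e‖ := by
  obtain ⟨m, rfl⟩ : ∃ m, l = m + 1 := ⟨l - 1, (Nat.succ_pred_eq_of_pos hl).symm⟩
  rw [← norm_iteratedFDeriv_fderiv]
  have hfd : (fderiv ℝ fun y => e y) = fun _ : E => e := by
    funext y; exact e.fderiv
  rw [hfd]
  match m with
  | 0 => rw [norm_iteratedFDeriv_zero]
  | (m+1) =>
    rw [iteratedFDeriv_const_of_ne (Nat.succ_ne_zero m)]
    simpa using norm_nonneg e

lemma norm_itfd_const_add_le {f : E → F} (hf : ContDiff ℝ ∞ f) (c : F) {l : ℕ} (hl : 1 ≤ l)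
    (x : E) :
    ‖iteratedFDeriv ℝ l (fun y => c + f y) x‖ = ‖iteratedFDeriv ℝ l f x‖ := by
  have : (fun y : E => c + f y) = (fun _ : E => c) + f := rfl
  rw [this, iteratedFDeriv_add_apply contDiff_const.contDiffAt (hf.of_le (le_of_lt (nat_lt_infty l))).contDiffAt,
    iteratedFDeriv_const_of_ne (Nat.one_le_iff_ne_zero.1 hl)]
  simp

end clm

noncomputable example {E : Type*} [NormedAddCommGroup E] [InnerProductSpace ℝ E] :
    (E →L[ℝ] E →L[ℝ] ℝ) := innerSL ℝ

section innerq
variable {E : Type*} [NormedAddCommGroup E] [InnerProductSpace ℝ E]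

lemma norm_itfd_id_le {l : ℕ} (hl : 1 ≤ l) (x : E) :
    ‖iteratedFDeriv ℝ l (fun y : E => y) x‖ ≤ 1 := by
  have h := norm_itfd_clm_le (ContinuousLinearMap.id ℝ E) hl x
  simpa using h.trans (ContinuousLinearMap.norm_id_le)

lemma norm_itfd_affine_le (a : E) {l : ℕ} (hl : 1 ≤ l) (x : E) :
    ‖iteratedFDeriv ℝ l (fun y : E => a + y) x‖ ≤ 1 := by
  have := norm_itfd_const_add_le (f := fun y : E => y) contDiff_id a hl x
  rw [this]
  exact norm_itfd_id_le hl x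

lemma norm_itfd_inner_bound (a : E) (ha : ‖a‖ ≤ 2) {l : ℕ} (hl : 1 ≤ l) :
    ‖iteratedFDeriv ℝ l (fun y : E => (innerSL ℝ (a + y)) y) 0‖ ≤ 2 ^ (l + 1) := by
  have hf : ContDiff ℝ ∞ (fun y : E => a + y) := contDiff_const.add contDiff_id
  have hg : ContDiff ℝ ∞ (fun y : E => y) := contDiff_id
  refine le_trans ((innerSL ℝ).norm_iteratedFDeriv_le_of_bilinear_of_le_one hf hg 0
    (le_of_lt (nat_lt_infty l)) (norm_innerSL_le ℝ)) ?_
  have hterm : ∀ i ∈ Finset.range (l + 1),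
      (l.choose i : ℝ) * ‖iteratedFDeriv ℝ i (fun y : E => a + y) 0‖ *
        ‖iteratedFDeriv ℝ (l - i) (fun y : E => y) 0‖ ≤ (l.choose i : ℝ) * 2 := by
    intro i hi
    rcases Nat.eq_zero_or_pos i with rfl | hi1
    · have h0 : ‖iteratedFDeriv ℝ 0 (fun y : E => a + y) 0‖ ≤ 2 := by
        rw [norm_iteratedFDeriv_zero]; simpa using ha
      have h1 : ‖iteratedFDeriv ℝ (l - 0) (fun y : E => y) 0‖ ≤ 1 :=
        norm_itfd_id_le (by omega) 0
      calc (l.choose 0 : ℝ) * ‖iteratedFDeriv ℝ 0 (fun y : E => a + y) 0‖ *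
            ‖iteratedFDeriv ℝ (l - 0) (fun y : E => y) 0‖
          ≤ (l.choose 0 : ℝ) * 2 * 1 := by
            apply mul_le_mul (mul_le_mul le_rfl h0 (norm_nonneg _) (by positivity)) h1
              (norm_nonneg _) (by positivity)
        _ = (l.choose 0 : ℝ) * 2 := by ring
    · have h0 : ‖iteratedFDeriv ℝ i (fun y : E => a + y) 0‖ ≤ 1 := norm_itfd_affine_le a hi1 0
      rcases Nat.eq_zero_or_pos (l - i) with hz | hpos
      · rw [hz, norm_iteratedFDeriv_zero]
        simp only [norm_zero, mul_zero]
        positivity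
      · have h1 : ‖iteratedFDeriv ℝ (l - i) (fun y : E => y) 0‖ ≤ 1 :=
          norm_itfd_id_le hpos 0
        calc (l.choose i : ℝ) * ‖iteratedFDeriv ℝ i (fun y : E => a + y) 0‖ *
              ‖iteratedFDeriv ℝ (l - i) (fun y : E => y) 0‖
            ≤ (l.choose i : ℝ) * 1 * 1 := by
              apply mul_le_mul (mul_le_mul le_rfl h0 (norm_nonneg _) (by positivity)) h1
                (norm_nonneg _) (by positivity)
          _ ≤ (l.choose i : ℝ) * 2 := by
              have : (0:ℝ) ≤ (l.choose i : ℝ) := by positivity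
              nlinarith
  refine le_trans (Finset.sum_le_sum hterm) ?_
  rw [← Finset.sum_mul]
  have hsum : ∑ i ∈ Finset.range (l + 1), (l.choose i : ℝ) = 2 ^ l := by
    have := Nat.sum_range_choose l
    exact_mod_cast congrArg (Nat.cast : ℕ → ℝ) this
  rw [hsum]
  rw [pow_succ]

end innerq

section central
variable {E : Type*} [NormedAddCommGroup E] [InnerProductSpace ℝ E]

lemma g_smooth (K : ℝ) : ContDiff ℝ ∞ (fun η : E => 1 + K + ‖η‖ ^ 2) :=
  contDiff_const.add (contDiff_norm_sq ℝ)

lemma g_pos {K : ℝ} (hK : 0 ≤ K) (η : E) : 0 < 1 + K + ‖η‖ ^ 2 := by positivity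

lemma g_one_le {K : ℝ} (hK : 0 ≤ K) (η : E) : 1 ≤ 1 + K + ‖η‖ ^ 2 := by
  nlinarith [sq_nonneg ‖η‖]

lemma G_smooth {K : ℝ} (hK : 0 ≤ K) (p : ℝ) :
    ContDiff ℝ ∞ (fun η : E => (1 + K + ‖η‖ ^ 2) ^ p) := by
  rw [contDiff_iff_contDiffAt]
  intro η
  exact ((g_smooth K).contDiffAt).rpow_const_of_ne (ne_of_gt (g_pos hK η))

lemma central_bound (p : ℝ) (n : ℕ) :
    ∃ C : ℝ, 0 < C ∧ ∀ (K : ℝ), 0 ≤ K → ∀ (η₀ : E) (i : ℕ), i ≤ n →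
      ‖iteratedFDeriv ℝ i (fun η : E => (1 + K + ‖η‖ ^ 2) ^ p) η₀‖ ≤
        C * Real.sqrt (1 + K + ‖η₀‖ ^ 2) ^ (2 * p - i) := by
  set Cp : ℝ := ∏ l ∈ Finset.range n, (|p - l| + 1) with hCp
  have hCp1 : 1 ≤ Cp := by
    rw [hCp]
    calc (1:ℝ) = ∏ _l ∈ Finset.range n, (1:ℝ) := by simp
      _ ≤ ∏ l ∈ Finset.range n, (|p - l| + 1) := by
          refine Finset.prod_le_prod (fun _ _ => by norm_num) (fun l _ => ?_)
          have := abs_nonneg (p - (l:ℝ))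
          linarith
  have hCp0 : (0:ℝ) ≤ Cp := le_trans zero_le_one hCp1
  refine ⟨((n : ℕ).factorial : ℝ) * Cp * 4 ^ n,
    mul_pos (mul_pos (by positivity) (lt_of_lt_of_le one_pos hCp1)) (by positivity), ?_⟩
  intro K hK η₀ i hin
  set g0 : ℝ := 1 + K + ‖η₀‖ ^ 2 with hg0def
  have hg0pos : 0 < g0 := g_pos hK η₀
  have hg0one : 1 ≤ g0 := g_one_le hK η₀
  set lam : ℝ := Real.sqrt g0 with hlamdef
  have hlam1 : 1 ≤ lam := by
    rw [hlamdef, show (1:ℝ) = Real.sqrt 1 by simp]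
    exact Real.sqrt_le_sqrt hg0one
  have hlam0 : 0 < lam := lt_of_lt_of_le one_pos hlam1
  have hlam2 : lam ^ 2 = g0 := Real.sq_sqrt (le_of_lt hg0pos)
  -- the rescaled inner function
  set a : E := (2 * lam⁻¹) • η₀ with hadef
  set h : E → ℝ := fun y : E => 1 + (innerSL ℝ (a + y)) y with hhdef
  set ρ : ℝ → ℝ := fun s : ℝ => g0 ^ p * s ^ p with hρdef
  have hη₀lam : ‖η₀‖ ≤ lam := by
    rw [hlamdef]
    have : ‖η₀‖ = Real.sqrt (‖η₀‖ ^ 2) := by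
      rw [Real.sqrt_sq (norm_nonneg η₀)]
    rw [this]
    apply Real.sqrt_le_sqrt
    nlinarith [hK]
  have ha2 : ‖a‖ ≤ 2 := by
    rw [hadef, norm_smul]
    have : |2 * lam⁻¹| = 2 * lam⁻¹ := abs_of_pos (by positivity)
    rw [Real.norm_eq_abs, this]
    calc 2 * lam⁻¹ * ‖η₀‖ ≤ 2 * lam⁻¹ * lam := by
          gcongr
      _ = 2 := by field_simp
  have hkey : ∀ y : E, g0 * h y = 1 + K + ‖η₀ + lam • y‖ ^ 2 := by
    intro y
    have hexp : ‖η₀ + lam • y‖ ^ 2 = ‖η₀‖ ^ 2 + 2 * inner ℝ η₀ (lam • y) + ‖lam • y‖ ^ 2 :=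
      norm_add_sq_real η₀ (lam • y)
    have hinner : (innerSL ℝ (a + y)) y =
        2 * lam⁻¹ * inner ℝ η₀ y + ‖y‖ ^ 2 := by
      rw [innerSL_apply_apply, inner_add_left, hadef, real_inner_smul_left,
        real_inner_self_eq_norm_sq]
    have hsm : ‖lam • y‖ ^ 2 = lam ^ 2 * ‖y‖ ^ 2 := by
      rw [norm_smul, Real.norm_eq_abs, mul_pow, sq_abs]
    have hsm2 : (inner ℝ η₀ (lam • y) : ℝ) = lam * inner ℝ η₀ y := real_inner_smul_right η₀ y lam
    rw [hhdef]
    simp only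
    rw [hinner, hexp, hsm, hsm2, ← hlam2]
    have hlamne : lam ≠ 0 := ne_of_gt hlam0
    field_simp [hg0def]
    ring_nf
    nlinarith [hlam2, sq_nonneg lam]
  have hhpos : ∀ y : E, 0 < h y := by
    intro y
    have h1 : 0 < g0 * h y := by
      rw [hkey y]; positivity
    by_contra hc
    push_neg at hc
    nlinarith
  have hGs : ContDiff ℝ ∞ (fun η : E => (1 + K + ‖η‖ ^ 2) ^ p) := G_smooth hK p
  -- scaling step
  have hscale := norm_itfd_le_comp_affine hGs hlam0 η₀ i
  -- identify the rescaled function with ρ ∘ h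
  have hφeq : (fun y : E => (fun η : E => (1 + K + ‖η‖ ^ 2) ^ p) (η₀ + lam • y)) = ρ ∘ h := by
    funext y
    simp only [Function.comp_apply, hρdef]
    rw [← Real.mul_rpow (le_of_lt hg0pos) (le_of_lt (hhpos y)), hkey y]
  rw [hφeq] at hscale
  -- smoothness of the pieces
  have hh_smooth : ContDiff ℝ ∞ h := by
    have : h = fun y : E => 1 + (inner ℝ (a + y) y : ℝ) := rfl
    rw [this]
    exact contDiff_const.add ((contDiff_const.add contDiff_id).inner ℝ contDiff_id)
  have hρ_smooth : ContDiffOn ℝ ∞ ρ (Ioi 0) := by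
    intro s hs
    exact (contDiffAt_const.mul (Real.contDiffAt_rpow_const_of_ne (ne_of_gt hs))).contDiffWithinAt
  -- the composition bound
  have hC : ∀ i', i' ≤ i → ‖iteratedFDerivWithin ℝ i' ρ (Ioi 0) (h 0)‖ ≤ g0 ^ p * Cp := by
    intro i' hi'
    have h0 : h 0 = 1 := by simp [hhdef]
    rw [h0, norm_iteratedFDerivWithin_eq_norm_iteratedDerivWithin,
      itderivWithin_const_rpow (g0 ^ p) p i' 1 (mem_Ioi.2 one_pos)]
    rw [Real.one_rpow, mul_one, Real.norm_eq_abs, abs_mul,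
      abs_of_pos (Real.rpow_pos_of_pos hg0pos p), Finset.abs_prod]
    apply mul_le_mul_of_nonneg_left ?_ (le_of_lt (Real.rpow_pos_of_pos hg0pos p))
    calc (∏ l ∈ Finset.range i', |p - l|) ≤ ∏ l ∈ Finset.range i', (|p - l| + 1) := by
          apply Finset.prod_le_prod (fun l _ => abs_nonneg _) (fun l _ => by linarith)
      _ ≤ Cp := by
          rw [hCp]
          have hsplit : (∏ l ∈ Finset.range i', (|p - l| + 1)) *
              ∏ l ∈ Finset.Ico i' n, (|p - l| + 1)
              = ∏ l ∈ Finset.range n, (|p - l| + 1) :=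
            Finset.prod_range_mul_prod_Ico _ (le_trans hi' hin)
          have h1le : (1:ℝ) ≤ ∏ l ∈ Finset.Ico i' n, (|p - l| + 1) := by
            calc (1:ℝ) = ∏ _l ∈ Finset.Ico i' n, (1:ℝ) := by simp
              _ ≤ ∏ l ∈ Finset.Ico i' n, (|p - l| + 1) := by
                refine Finset.prod_le_prod (fun _ _ => by norm_num) (fun l _ => ?_)
                have := abs_nonneg (p - (l:ℝ))
                linarith
          calc (∏ l ∈ Finset.range i', (|p - l| + 1))
              ≤ (∏ l ∈ Finset.range i', (|p - l| + 1)) *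
                ∏ l ∈ Finset.Ico i' n, (|p - l| + 1) :=
                le_mul_of_one_le_right (Finset.prod_nonneg (fun l _ => by positivity)) h1le
            _ = _ := hsplit
  have hD : ∀ i', 1 ≤ i' → i' ≤ i → ‖iteratedFDerivWithin ℝ i' h univ 0‖ ≤ 4 ^ i' := by
    intro i' h1 _
    rw [iteratedFDerivWithin_univ]
    have hQ : ContDiff ℝ ∞ (fun y : E => (innerSL ℝ (a + y)) y) := by
      have : (fun y : E => (innerSL ℝ (a + y)) y) = fun y : E => (inner ℝ (a + y) y : ℝ) := rfl
      rw [this]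
      exact (contDiff_const.add contDiff_id).inner ℝ contDiff_id
    have := norm_itfd_const_add_le hQ (1:ℝ) h1 (0:E)
    rw [hhdef]
    rw [this]
    refine le_trans (norm_itfd_inner_bound a ha2 h1) ?_
    have h2i : (2:ℝ) ≤ 2 ^ i' := by
      calc (2:ℝ) = 2 ^ 1 := by norm_num
        _ ≤ 2 ^ i' := by
            apply pow_le_pow_right₀ (by norm_num) h1
    calc (2:ℝ) ^ (i' + 1) = 2 * 2 ^ i' := by ring
      _ ≤ 2 ^ i' * 2 ^ i' := by nlinarith [pow_pos (by norm_num : (0:ℝ) < 2) i']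
      _ = 4 ^ i' := by rw [← mul_pow]; norm_num
  have hcomp := norm_iteratedFDerivWithin_comp_le (n := i) (s := (univ : Set E)) (t := Ioi (0:ℝ))
    hρ_smooth hh_smooth.contDiffOn (le_of_lt (nat_lt_infty i)) isOpen_Ioi.uniqueDiffOn
    uniqueDiffOn_univ (fun y _ => hhpos y) (mem_univ (0:E)) hC hD
  rw [iteratedFDerivWithin_univ] at hcomp
  -- put everything together
  have hfinal := le_trans hscale
    (mul_le_mul_of_nonneg_left hcomp (by positivity))
  refine le_trans hfinal ?_
  -- arithmetic: lam⁻¹^i * (i! * (g0^p * Cp) * 4^i) ≤ n! * Cp * 4^n * lam^(2p - i)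
  have hg0p : g0 ^ p = lam ^ (2 * p) := by
    rw [← hlam2, ← Real.rpow_natCast lam 2, ← Real.rpow_mul (le_of_lt hlam0)]
    norm_num
  have hinv : lam⁻¹ ^ i = lam ^ (-(i:ℝ)) := by
    rw [← Real.rpow_natCast lam⁻¹ i, Real.inv_rpow (le_of_lt hlam0),
      ← Real.rpow_neg (le_of_lt hlam0)]
  have hmul : lam ^ (2 * p) * lam ^ (-(i:ℝ)) = lam ^ (2 * p - i) := by
    rw [← Real.rpow_add hlam0]
    ring_nf
  calc lam⁻¹ ^ i * ((i : ℕ).factorial * (g0 ^ p * Cp) * 4 ^ i)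
      = ((i : ℕ).factorial * Cp * 4 ^ i) * (lam ^ (2 * p) * lam ^ (-(i:ℝ))) := by
        rw [hg0p, hinv]; ring
    _ = ((i : ℕ).factorial * Cp * 4 ^ i) * lam ^ (2 * p - i) := by rw [hmul]
    _ ≤ ((n : ℕ).factorial * Cp * 4 ^ n) * lam ^ (2 * p - i) := by
        apply mul_le_mul_of_nonneg_right ?_ (le_of_lt (Real.rpow_pos_of_pos hlam0 _))
        have hf1 : ((i : ℕ).factorial : ℝ) * Cp ≤ ((n : ℕ).factorial : ℝ) * Cp :=
          mul_le_mul_of_nonneg_right (by exact_mod_cast Nat.factorial_le hin) hCp0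
        exact mul_le_mul hf1 (pow_le_pow_right₀ (by norm_num) hin) (by positivity)
          (mul_nonneg (by positivity) hCp0)

end central

section expfactor
variable {E : Type*} [NormedAddCommGroup E] [InnerProductSpace ℝ E]

lemma exp_factor_bound {γ : ℝ} (hγ0 : 0 < γ) (hγ1 : γ ≤ 1) (lam₁ : ℝ) (n : ℕ) :
    ∃ C : ℝ, 0 < C ∧ ∀ z : ℝ, 0 ≤ z → z ≤ lam₁ → ∀ K : ℝ, 0 ≤ K → ∀ (η₀ : E) (i : ℕ), i ≤ n →
      ‖iteratedFDeriv ℝ i (fun η : E => Real.exp (z * (1 + K + ‖η‖ ^ 2) ^ (γ/2))) η₀‖ ≤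
        C * Real.sqrt (1 + K + ‖η₀‖ ^ 2) ^ (-(i:ℝ) * (1 - γ)) *
          Real.exp (z * Real.sqrt (1 + K + ‖η₀‖ ^ 2) ^ γ) := by
  obtain ⟨CG, hCG0, hCG⟩ := central_bound (E := E) (γ/2) n
  set D : ℝ := max CG 1 with hDdef
  have hD1 : 1 ≤ D := le_max_right _ _
  refine ⟨(n : ℕ).factorial * (max lam₁ 1) ^ n * D ^ n, by positivity, ?_⟩
  intro z hz0 hz1 K hK η₀ i hin
  set g0 : ℝ := 1 + K + ‖η₀‖ ^ 2 with hg0def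
  have hg0pos : 0 < g0 := g_pos hK η₀
  set lam : ℝ := Real.sqrt g0 with hlamdef
  have hlam1 : 1 ≤ lam := by
    rw [hlamdef, show (1:ℝ) = Real.sqrt 1 by simp]
    exact Real.sqrt_le_sqrt (g_one_le hK η₀)
  have hlam0 : 0 < lam := lt_of_lt_of_le one_pos hlam1
  have hlam2 : lam ^ 2 = g0 := Real.sq_sqrt (le_of_lt hg0pos)
  have hlamγ : g0 ^ (γ/2) = lam ^ γ := by
    rw [← hlam2, ← Real.rpow_natCast lam 2, ← Real.rpow_mul (le_of_lt hlam0)]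
    congr 1
    push_cast
    ring
  set μ : ℝ := lam ^ (1 - γ) with hμdef
  have hμ0 : 0 < μ := Real.rpow_pos_of_pos hlam0 _
  have hμ1 : 1 ≤ μ := Real.one_le_rpow hlam1 (by linarith)
  set G : E → ℝ := fun η : E => (1 + K + ‖η‖ ^ 2) ^ (γ/2) with hGdef
  have hG : ContDiff ℝ ∞ G := G_smooth hK (γ/2)
  have hP : ContDiff ℝ ∞ (fun η : E => Real.exp (z * G η)) :=
    Real.contDiff_exp.comp (contDiff_const.mul hG)
  have hscale := norm_itfd_le_comp_affine hP hμ0 η₀ i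
  -- the rescaled function as a composition
  have hcompeq : (fun y : E => (fun η : E => Real.exp (z * G η)) (η₀ + μ • y)) =
      (fun t : ℝ => Real.exp (z * t)) ∘ (fun y : E => G (η₀ + μ • y)) := rfl
  rw [hcompeq] at hscale
  have hinner_smooth : ContDiff ℝ ∞ (fun y : E => G (η₀ + μ • y)) :=
    hG.comp (contDiff_const.add (contDiff_id.const_smul μ))
  have houter_smooth : ContDiff ℝ ∞ (fun t : ℝ => Real.exp (z * t)) :=
    Real.contDiff_exp.comp (contDiff_const.mul contDiff_id)
  have hval : (fun y : E => G (η₀ + μ • y)) 0 = lam ^ γ := by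
    simp only [smul_zero, add_zero, hGdef]
    rw [← hg0def, hlamγ]
  have hCout : ∀ l, l ≤ i →
      ‖iteratedFDeriv ℝ l (fun t : ℝ => Real.exp (z * t)) ((fun y : E => G (η₀ + μ • y)) 0)‖ ≤
        (max lam₁ 1) ^ n * Real.exp (z * lam ^ γ) := by
    intro l hl
    rw [hval, norm_iteratedFDeriv_eq_norm_iteratedDeriv, iteratedDeriv_exp_const_mul l z]
    rw [Real.norm_eq_abs, abs_of_nonneg (by positivity)]
    have hzl : z ^ l ≤ (max lam₁ 1) ^ n := by
      calc z ^ l ≤ (max lam₁ 1) ^ l :=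
            pow_le_pow_left₀ hz0 (le_trans hz1 (le_max_left _ _)) l
        _ ≤ (max lam₁ 1) ^ n := pow_le_pow_right₀ (le_max_right _ _) (le_trans hl hin)
    exact mul_le_mul_of_nonneg_right hzl (le_of_lt (Real.exp_pos _))
  have hDin : ∀ l, 1 ≤ l → l ≤ i →
      ‖iteratedFDeriv ℝ l (fun y : E => G (η₀ + μ • y)) 0‖ ≤ D ^ l := by
    intro l hl1 hli
    refine le_trans (norm_itfd_comp_affine_le hG η₀ μ l) ?_
    have hGb := hCG K hK η₀ l (le_trans hli hin)
    rw [← hGdef, ← hg0def, ← hlamdef] at hGb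
    have hexp1 : 2 * (γ/2) - (l:ℝ) = γ - l := by ring
    rw [hexp1] at hGb
    have hstep : |μ| ^ l * ‖iteratedFDeriv ℝ l G η₀‖ ≤
        μ ^ l * (CG * lam ^ ((γ:ℝ) - l)) := by
      rw [abs_of_pos hμ0]
      exact mul_le_mul_of_nonneg_left hGb (by positivity)
    refine le_trans hstep ?_
    have hμl : μ ^ l = lam ^ ((1 - γ) * l) := by
      rw [hμdef, ← Real.rpow_natCast (lam ^ (1-γ)) l, ← Real.rpow_mul (le_of_lt hlam0)]
    have hprod : μ ^ l * (CG * lam ^ ((γ:ℝ) - l)) = CG * lam ^ (γ * (1 - l)) := by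
      rw [hμl, ← mul_assoc, mul_comm (lam ^ ((1-γ)*(l:ℝ))) CG, mul_assoc,
        ← Real.rpow_add hlam0]
      ring_nf
    rw [hprod]
    have hle1 : lam ^ (γ * (1 - (l:ℝ))) ≤ 1 := by
      apply Real.rpow_le_one_of_one_le_of_nonpos hlam1
      have : (1:ℝ) - l ≤ 0 := by
        have : (1:ℝ) ≤ l := by exact_mod_cast hl1
        linarith
      nlinarith
    calc CG * lam ^ (γ * (1 - (l:ℝ))) ≤ CG * 1 := by
          exact mul_le_mul_of_nonneg_left hle1 (le_of_lt hCG0)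
      _ = CG := mul_one CG
      _ ≤ D := le_max_left _ _
      _ ≤ D ^ l := le_self_pow₀ hD1 (by omega)
  have hcomp := norm_iteratedFDeriv_comp_le houter_smooth hinner_smooth
    (le_of_lt (nat_lt_infty i)) 0 hCout hDin
  have hfinal := le_trans hscale (mul_le_mul_of_nonneg_left hcomp (by positivity))
  refine le_trans hfinal ?_
  have hμinv : μ⁻¹ ^ i = lam ^ (-(i:ℝ) * (1 - γ)) := by
    have h1 : μ⁻¹ = lam ^ (-(1 - γ)) := by
      rw [hμdef, Real.rpow_neg (le_of_lt hlam0)]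
    rw [h1, ← Real.rpow_natCast (lam ^ (-(1-γ))) i, ← Real.rpow_mul (le_of_lt hlam0)]
    congr 1
    ring
  calc μ⁻¹ ^ i * ((i : ℕ).factorial * ((max lam₁ 1) ^ n * Real.exp (z * lam ^ γ)) * D ^ i)
      = ((i : ℕ).factorial * (max lam₁ 1) ^ n * D ^ i) * lam ^ (-(i:ℝ)*(1-γ)) *
          Real.exp (z * lam ^ γ) := by
        rw [hμinv]; ring
    _ ≤ ((n : ℕ).factorial * (max lam₁ 1) ^ n * D ^ n) * lam ^ (-(i:ℝ)*(1-γ)) *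
          Real.exp (z * lam ^ γ) := by
        have hfac : ((i:ℕ).factorial : ℝ) ≤ ((n:ℕ).factorial : ℝ) := by
          exact_mod_cast Nat.factorial_le hin
        have hDn : D ^ i ≤ D ^ n := pow_le_pow_right₀ hD1 hin
        have h1 : ((i : ℕ).factorial : ℝ) * (max lam₁ 1) ^ n * D ^ i ≤
            ((n : ℕ).factorial : ℝ) * (max lam₁ 1) ^ n * D ^ n := by
          apply mul_le_mul (mul_le_mul_of_nonneg_right hfac (by positivity)) hDn
            (by positivity) (by positivity)
        exact mul_le_mul_of_nonneg_right (mul_le_mul_of_nonneg_right h1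
          (le_of_lt (Real.rpow_pos_of_pos hlam0 _))) (le_of_lt (Real.exp_pos _))

end expfactor

/-- Japanese bracket `⟨k, η⟩ = √(1 + |k|² + |η|²)` for `k ∈ ℤ³`, `η ∈ ℝ³`. -/
noncomputable def jbe (k : Fin 3 → ℤ) (η : EuclideanSpace ℝ (Fin 3)) : ℝ :=
  Real.sqrt (1 + (∑ i, ((k i : ℝ)) ^ 2) + ‖η‖ ^ 2)

/-- Derivative bound on the Fourier weight `A_{k,η} = e^{z⟨k,η⟩^γ}⟨k,η⟩^σ`:
`‖D^j_η A_{k,η}‖ ≤ C·⟨k,η⟩^{−j(1−γ)}·A_{k,η} ≤ C·A_{k,η}`. -/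
theorem weight_derivative_bound {γ σ lam₁ : ℝ} (j : ℕ) (hγ0 : 0 < γ) (hγ1 : γ ≤ 1)
    (hσ : 0 < σ) (hlam : 0 < lam₁) :
    ∃ C : ℝ, 0 < C ∧ ∀ z : ℝ, 0 ≤ z → z ≤ lam₁ →
      ∀ (k : Fin 3 → ℤ) (η : EuclideanSpace ℝ (Fin 3)),
        ‖iteratedFDeriv ℝ j
            (fun η' : EuclideanSpace ℝ (Fin 3) =>
              Real.exp (z * jbe k η' ^ γ) * jbe k η' ^ σ) η‖ ≤
          C * jbe k η ^ (-((j : ℝ) * (1 - γ))) *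
            (Real.exp (z * jbe k η ^ γ) * jbe k η ^ σ) ∧
        ‖iteratedFDeriv ℝ j
            (fun η' : EuclideanSpace ℝ (Fin 3) =>
              Real.exp (z * jbe k η' ^ γ) * jbe k η' ^ σ) η‖ ≤
          C * (Real.exp (z * jbe k η ^ γ) * jbe k η ^ σ) := by
  obtain ⟨C₁, hC₁0, hC₁⟩ :=
    exp_factor_bound (E := EuclideanSpace ℝ (Fin 3)) hγ0 hγ1 lam₁ j
  obtain ⟨C₂, hC₂0, hC₂⟩ := central_bound (E := EuclideanSpace ℝ (Fin 3)) (σ/2) j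
  refine ⟨2 ^ j * C₁ * C₂, by positivity, ?_⟩
  intro z hz0 hz1 k η
  set K : ℝ := ∑ i, ((k i : ℝ)) ^ 2 with hKdef
  have hK : 0 ≤ K := Finset.sum_nonneg (fun i _ => sq_nonneg _)
  set lam : ℝ := Real.sqrt (1 + K + ‖η‖ ^ 2) with hlamdef
  have hg0pos : (0:ℝ) < 1 + K + ‖η‖ ^ 2 := g_pos hK η
  have hlam1 : 1 ≤ lam := by
    have := Real.sqrt_le_sqrt (g_one_le hK η)
    rwa [Real.sqrt_one] at this
  have hlam0 : 0 < lam := lt_of_lt_of_le one_pos hlam1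
  -- rewrite jbe powers
  have hjbe : ∀ (η' : EuclideanSpace ℝ (Fin 3)) (t : ℝ),
      jbe k η' ^ t = (1 + K + ‖η'‖ ^ 2) ^ (t/2) := by
    intro η' t
    rw [jbe, ← hKdef, Real.sqrt_eq_rpow, ← Real.rpow_mul (le_of_lt (g_pos hK η'))]
    congr 1
    ring
  have hfun : (fun η' : EuclideanSpace ℝ (Fin 3) =>
      Real.exp (z * jbe k η' ^ γ) * jbe k η' ^ σ) =
      fun η' : EuclideanSpace ℝ (Fin 3) =>
        Real.exp (z * (1 + K + ‖η'‖ ^ 2) ^ (γ/2)) * (1 + K + ‖η'‖ ^ 2) ^ (σ/2) := by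
    funext η'
    rw [hjbe η' γ, hjbe η' σ]
  have hjγ : jbe k η ^ γ = lam ^ γ := by rw [jbe, ← hKdef, hlamdef]
  have hjσ : jbe k η ^ σ = lam ^ σ := by rw [jbe, ← hKdef, hlamdef]
  have hjν : jbe k η ^ (-((j : ℝ) * (1 - γ))) = lam ^ (-((j : ℝ) * (1 - γ))) := by
    rw [jbe, ← hKdef, hlamdef]
  rw [hfun, hjγ, hjσ, hjν]
  -- smoothness of the two factors
  have hP : ContDiff ℝ ∞ (fun η' : EuclideanSpace ℝ (Fin 3) =>
      Real.exp (z * (1 + K + ‖η'‖ ^ 2) ^ (γ/2))) :=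
    Real.contDiff_exp.comp (contDiff_const.mul (G_smooth hK (γ/2)))
  have hQ : ContDiff ℝ ∞ (fun η' : EuclideanSpace ℝ (Fin 3) =>
      (1 + K + ‖η'‖ ^ 2) ^ (σ/2)) := G_smooth hK (σ/2)
  have hmul := norm_iteratedFDeriv_mul_le hP hQ η (le_of_lt (nat_lt_infty j))
  -- bound each term of the sum
  have hterm : ∀ i ∈ Finset.range (j + 1),
      (j.choose i : ℝ) *
        ‖iteratedFDeriv ℝ i (fun η' : EuclideanSpace ℝ (Fin 3) =>
            Real.exp (z * (1 + K + ‖η'‖ ^ 2) ^ (γ/2))) η‖ *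
        ‖iteratedFDeriv ℝ (j - i) (fun η' : EuclideanSpace ℝ (Fin 3) =>
            (1 + K + ‖η'‖ ^ 2) ^ (σ/2)) η‖ ≤
      (j.choose i : ℝ) * (C₁ * C₂) *
        (lam ^ (-((j : ℝ) * (1 - γ))) * (Real.exp (z * lam ^ γ) * lam ^ σ)) := by
    intro i hi
    have hij : i ≤ j := by
      have := Finset.mem_range.1 hi; omega
    have hPb := hC₁ z hz0 hz1 K hK η i hij
    have hQb := hC₂ K hK η (j - i) (Nat.sub_le j i)
    rw [← hlamdef] at hPb hQb
    have hprod : (C₁ * lam ^ (-(i:ℝ) * (1 - γ)) * Real.exp (z * lam ^ γ)) *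
        (C₂ * lam ^ (2 * (σ/2) - (j - i : ℕ))) ≤
        (C₁ * C₂) * (lam ^ (-((j : ℝ) * (1 - γ))) * (Real.exp (z * lam ^ γ) * lam ^ σ)) := by
      have hcast : ((j - i : ℕ) : ℝ) = (j : ℝ) - i := by
        push_cast [Nat.cast_sub hij]; ring
      have hexp2 : (2 : ℝ) * (σ/2) - ((j - i : ℕ) : ℝ) = σ - ((j:ℝ) - i) := by
        rw [hcast]; ring
      rw [hexp2]
      have hexple : lam ^ (-(i:ℝ) * (1 - γ)) * lam ^ (σ - ((j:ℝ) - i)) ≤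
          lam ^ (-((j : ℝ) * (1 - γ))) * lam ^ σ := by
        rw [← Real.rpow_add hlam0, ← Real.rpow_add hlam0]
        apply Real.rpow_le_rpow_of_exponent_le hlam1
        have hb : (0:ℝ) ≤ (j:ℝ) - i := by
          have : (i:ℝ) ≤ j := by exact_mod_cast hij
          linarith
        nlinarith
      calc (C₁ * lam ^ (-(i:ℝ) * (1 - γ)) * Real.exp (z * lam ^ γ)) *
            (C₂ * lam ^ (σ - ((j:ℝ) - i)))
          = (C₁ * C₂) * Real.exp (z * lam ^ γ) *
              (lam ^ (-(i:ℝ) * (1 - γ)) * lam ^ (σ - ((j:ℝ) - i))) := by ring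
        _ ≤ (C₁ * C₂) * Real.exp (z * lam ^ γ) *
              (lam ^ (-((j : ℝ) * (1 - γ))) * lam ^ σ) := by
            exact mul_le_mul_of_nonneg_left hexple (by positivity)
        _ = (C₁ * C₂) * (lam ^ (-((j : ℝ) * (1 - γ))) *
              (Real.exp (z * lam ^ γ) * lam ^ σ)) := by ring
    calc (j.choose i : ℝ) *
          ‖iteratedFDeriv ℝ i (fun η' : EuclideanSpace ℝ (Fin 3) =>
              Real.exp (z * (1 + K + ‖η'‖ ^ 2) ^ (γ/2))) η‖ *
          ‖iteratedFDeriv ℝ (j - i) (fun η' : EuclideanSpace ℝ (Fin 3) =>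
              (1 + K + ‖η'‖ ^ 2) ^ (σ/2)) η‖
        ≤ (j.choose i : ℝ) *
            ((C₁ * lam ^ (-(i:ℝ) * (1 - γ)) * Real.exp (z * lam ^ γ)) *
              (C₂ * lam ^ (2 * (σ/2) - (j - i : ℕ)))) := by
          rw [mul_assoc]
          apply mul_le_mul_of_nonneg_left ?_ (by positivity)
          apply mul_le_mul hPb hQb (norm_nonneg _) (by positivity)
      _ ≤ (j.choose i : ℝ) * ((C₁ * C₂) *
            (lam ^ (-((j : ℝ) * (1 - γ))) * (Real.exp (z * lam ^ γ) * lam ^ σ))) :=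
          mul_le_mul_of_nonneg_left hprod (by positivity)
      _ = (j.choose i : ℝ) * (C₁ * C₂) *
            (lam ^ (-((j : ℝ) * (1 - γ))) * (Real.exp (z * lam ^ γ) * lam ^ σ)) := by ring
  have hsum := le_trans hmul (Finset.sum_le_sum hterm)
  have hchoose : ∑ i ∈ Finset.range (j + 1), (j.choose i : ℝ) * (C₁ * C₂) *
      (lam ^ (-((j : ℝ) * (1 - γ))) * (Real.exp (z * lam ^ γ) * lam ^ σ)) =
      2 ^ j * C₁ * C₂ * lam ^ (-((j : ℝ) * (1 - γ))) * (Real.exp (z * lam ^ γ) * lam ^ σ) := by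
    rw [← Finset.sum_mul, ← Finset.sum_mul]
    have : ∑ i ∈ Finset.range (j + 1), (j.choose i : ℝ) = 2 ^ j := by
      have := Nat.sum_range_choose j
      exact_mod_cast congrArg (Nat.cast : ℕ → ℝ) this
    rw [this]
    ring
  rw [hchoose] at hsum
  constructor
  · exact hsum
  · refine le_trans hsum ?_
    have hle1 : lam ^ (-((j : ℝ) * (1 - γ))) ≤ 1 := by
      apply Real.rpow_le_one_of_one_le_of_nonpos hlam1
      have h1 : (0:ℝ) ≤ (j : ℝ) := by positivity
      nlinarith
    calc 2 ^ j * C₁ * C₂ * lam ^ (-((j : ℝ) * (1 - γ))) * (Real.exp (z * lam ^ γ) * lam ^ σ)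
        ≤ 2 ^ j * C₁ * C₂ * 1 * (Real.exp (z * lam ^ γ) * lam ^ σ) := by
          apply mul_le_mul_of_nonneg_right (mul_le_mul_of_nonneg_left hle1 (by positivity)) ?_
          have := Real.rpow_nonneg (le_of_lt hlam0) σ
          positivity
      _ = 2 ^ j * C₁ * C₂ * (Real.exp (z * lam ^ γ) * lam ^ σ) := by ring
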